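/- Let N be an integer with N > 8 and N ≠ 10, and let (m_k) for 1 ≤ k ≤ ⌊N/2⌋ be nonnegative real numbers such that m_k ≥ 2 whenever gcd(k, N) = 1. Then Σ_{k=1}^{⌊N/2⌋} m_k · cos²(2πk/N) > 2. -/

import Mathlib

open scoped BigOperators

/-- Lower bound of the sum by two of its terms (indices `1` and `k2`),
using `m k ≥ 2` at coprime indices and nonnegativity elsewhere. -/
lemma statement_15_aux (N : ℕ) (hN : 8 < N) (m : ℕ → ℝ)
    (hm0 : ∀ k, 1 ≤ k → k ≤ N / 2 → 0 ≤ m k)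
    (hm2 : ∀ k, 1 ≤ k → k ≤ N / 2 → Nat.gcd k N = 1 → 2 ≤ m k)
    (k2 : ℕ) (hk2a : 1 ≤ k2) (hk2b : k2 ≤ N / 2) (hne : (1 : ℕ) ≠ k2)
    (hc2 : Nat.gcd k2 N = 1) :
    2 * Real.cos (2 * Real.pi * 1 / N) ^ 2 + 2 * Real.cos (2 * Real.pi * k2 / N) ^ 2
      ≤ ∑ k ∈ Finset.Icc 1 (N / 2), m k * Real.cos (2 * Real.pi * k / N) ^ 2 := by
  have h1le : 1 ≤ N / 2 := by omega
  have hsub : ({1, k2} : Finset ℕ) ⊆ Finset.Icc 1 (N / 2) := by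
    intro x hx
    simp only [Finset.mem_insert, Finset.mem_singleton] at hx
    rcases hx with rfl | rfl <;> simp [Finset.mem_Icc] <;> omega
  calc 2 * Real.cos (2 * Real.pi * 1 / N) ^ 2 + 2 * Real.cos (2 * Real.pi * k2 / N) ^ 2
      ≤ ∑ k ∈ ({1, k2} : Finset ℕ), m k * Real.cos (2 * Real.pi * k / N) ^ 2 := by
        rw [Finset.sum_pair hne]
        have t1 : 2 * Real.cos (2 * Real.pi * 1 / N) ^ 2
            ≤ m 1 * Real.cos (2 * Real.pi * 1 / N) ^ 2 :=
          mul_le_mul_of_nonneg_right (hm2 1 le_rfl h1le (Nat.gcd_one_left N)) (sq_nonneg _)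
        have t2 : 2 * Real.cos (2 * Real.pi * k2 / N) ^ 2
            ≤ m k2 * Real.cos (2 * Real.pi * k2 / N) ^ 2 :=
          mul_le_mul_of_nonneg_right (hm2 k2 hk2a hk2b hc2) (sq_nonneg _)
        push_cast
        push_cast at t1 t2
        linarith
    _ ≤ ∑ k ∈ Finset.Icc 1 (N / 2), m k * Real.cos (2 * Real.pi * k / N) ^ 2 := by
        refine Finset.sum_le_sum_of_subset_of_nonneg hsub fun k hk _ => ?_
        rw [Finset.mem_Icc] at hk
        exact mul_nonneg (hm0 k hk.1 hk.2) (sq_nonneg _)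

theorem statement_15 (N : ℕ) (hN : 8 < N) (hN10 : N ≠ 10) (m : ℕ → ℝ)
    (hm0 : ∀ k, 1 ≤ k → k ≤ N / 2 → 0 ≤ m k)
    (hm2 : ∀ k, 1 ≤ k → k ≤ N / 2 → Nat.gcd k N = 1 → 2 ≤ m k) :
    2 < ∑ k ∈ Finset.Icc 1 (N / 2), m k * Real.cos (2 * Real.pi * k / N) ^ 2 := by
  have hπ : (0:ℝ) < Real.pi := Real.pi_pos
  have hNR : (0:ℝ) < (N:ℝ) := by positivity
  set c : ℝ := Real.cos (2 * Real.pi / N) with hc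
  obtain ⟨t, ht | ht | ht⟩ : ∃ t, N = 2 * t + 1 ∨ N = 4 * t ∨ N = 4 * t + 2 := by
    rcases Nat.even_or_odd N with ⟨u, hu⟩ | ⟨u, hu⟩
    · rcases Nat.even_or_odd u with ⟨s, hs⟩ | ⟨s, hs⟩
      · exact ⟨s, Or.inr (Or.inl (by omega))⟩
      · exact ⟨s, Or.inr (Or.inr (by omega))⟩
    · exact ⟨u, Or.inl (by omega)⟩
  · -- N odd, N = 2t+1, k2 = t ; cos(2πt/N) = -cos(π/N)
    have ht4 : 4 ≤ t := by omega
    have hcop : Nat.gcd t N = 1 := by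
      rw [ht, show 2 * t + 1 = 1 + 2 * t from by ring, Nat.gcd_add_mul_right_right]
      exact Nat.gcd_one_right t
    have hb := statement_15_aux N hN m hm0 hm2 t (by omega) (by omega) (by omega) hcop
    -- trig: 2π·t/N = π - π/N
    have harg : 2 * Real.pi * (t:ℝ) / N = Real.pi - Real.pi / N := by
      have hNt : (N:ℝ) = 2 * t + 1 := by rw [ht]; push_cast; ring
      field_simp [hNt]; rw [hNt]; ring
    have hcos2 : Real.cos (2 * Real.pi * (t:ℝ) / N) ^ 2 = 1/2 + c/2 := by
      rw [harg, Real.cos_pi_sub, neg_sq, Real.cos_sq, hc,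
        show 2 * (Real.pi / (N:ℝ)) = 2 * Real.pi / N from by ring]
    -- c > 1/2 since 2π/N < π/3
    have hclb : 1/2 < c := by
      rw [hc, ← Real.cos_pi_div_three]
      apply Real.cos_lt_cos_of_nonneg_of_le_pi (by positivity)
      · nlinarith [Real.pi_le_four]
      · rw [div_lt_div_iff₀ hNR (by norm_num)]
        have : (9:ℝ) ≤ N := by exact_mod_cast (by omega : 9 ≤ N)
        nlinarith
    have hcos1 : Real.cos (2 * Real.pi * (1:ℝ) / N) ^ 2 = c ^ 2 := by
      rw [hc]; congr 2; ring
    rw [hcos1, hcos2] at hb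
    nlinarith
  · -- N = 4t, k2 = 2t - 1 ; cos(2π(2t-1)/N) = -c
    have ht3 : 3 ≤ t := by omega
    have hcop : Nat.gcd (2 * t - 1) N = 1 := by
      have h1 : N = 2 + 2 * (2 * t - 1) := by omega
      rw [h1, Nat.gcd_add_mul_right_right]
      exact Nat.Coprime.odd_of_right (by exact (Nat.coprime_two_right).mpr ⟨t - 1, by omega⟩) |>.coprime_two_right
    have hb := statement_15_aux N hN m hm0 hm2 (2 * t - 1) (by omega) (by omega) (by omega) hcop
    have hcast : ((2 * t - 1 : ℕ) : ℝ) = 2 * t - 1 := by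
      push_cast [Nat.cast_sub (by omega : 1 ≤ 2 * t)]; ring
    have harg : 2 * Real.pi * ((2 * t - 1 : ℕ) : ℝ) / N = Real.pi - 2 * Real.pi / N := by
      have hNt : (N:ℝ) = 4 * t := by rw [ht]; push_cast; ring
      rw [hcast]
      have htR : (0:ℝ) < (t:ℝ) := by exact_mod_cast (by omega : 0 < t)
      field_simp [hNt]; rw [hNt]; ring
    have hcos2 : Real.cos (2 * Real.pi * ((2 * t - 1 : ℕ) : ℝ) / N) ^ 2 = c ^ 2 := by
      rw [harg, Real.cos_pi_sub, neg_sq, hc]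
    have hclb : Real.sqrt 3 / 2 ≤ c := by
      rw [hc, ← Real.cos_pi_div_six]
      apply Real.cos_le_cos_of_nonneg_of_le_pi (by positivity)
      · nlinarith [Real.pi_le_four]
      · rw [div_le_div_iff₀ hNR (by norm_num)]
        have : (12:ℝ) ≤ N := by exact_mod_cast (by omega : 12 ≤ N)
        nlinarith
    have hcos1 : Real.cos (2 * Real.pi * (1:ℝ) / N) ^ 2 = c ^ 2 := by
      rw [hc]; congr 2; ring
    rw [hcos1, hcos2] at hb
    have h3 : Real.sqrt 3 ^ 2 = 3 := Real.sq_sqrt (by norm_num)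
    nlinarith [Real.sqrt_nonneg 3]
  · -- N = 4t+2, k2 = 2t - 1 ; cos(2π(2t-1)/N) = -cos(4π/N) = -(2c²-1)
    have ht3 : 3 ≤ t := by omega
    have hcop : Nat.gcd (2 * t - 1) N = 1 := by
      have h1 : N = 4 + 2 * (2 * t - 1) := by omega
      rw [h1, Nat.gcd_add_mul_right_right]
      have hodd : Odd (2 * t - 1) := ⟨t - 1, by omega⟩
      have h2 : Nat.Coprime (2 * t - 1) 2 := hodd.coprime_two_right
      have := h2.pow_right 2
      simpa using this
    have hb := statement_15_aux N hN m hm0 hm2 (2 * t - 1) (by omega) (by omega) (by omega) hcop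
    have hcast : ((2 * t - 1 : ℕ) : ℝ) = 2 * t - 1 := by
      push_cast [Nat.cast_sub (by omega : 1 ≤ 2 * t)]; ring
    have harg : 2 * Real.pi * ((2 * t - 1 : ℕ) : ℝ) / N = Real.pi - 2 * (2 * Real.pi / N) := by
      have hNt : (N:ℝ) = 4 * t + 2 := by rw [ht]; push_cast; ring
      rw [hcast]
      field_simp [hNt]; rw [hNt]; ring
    have hcos2 : Real.cos (2 * Real.pi * ((2 * t - 1 : ℕ) : ℝ) / N) ^ 2
        = (2 * c ^ 2 - 1) ^ 2 := by
      rw [harg, Real.cos_pi_sub, neg_sq, Real.cos_two_mul, hc]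
    have hclb : Real.sqrt 3 / 2 < c := by
      rw [hc, ← Real.cos_pi_div_six]
      apply Real.cos_lt_cos_of_nonneg_of_le_pi (by positivity)
      · nlinarith [Real.pi_le_four]
      · rw [div_lt_div_iff₀ hNR (by norm_num)]
        have : (14:ℝ) ≤ N := by exact_mod_cast (by omega : 14 ≤ N)
        nlinarith
    have hcos1 : Real.cos (2 * Real.pi * (1:ℝ) / N) ^ 2 = c ^ 2 := by
      rw [hc]; congr 2; ring
    rw [hcos1, hcos2] at hb
    have h3 : Real.sqrt 3 ^ 2 = 3 := Real.sq_sqrt (by norm_num)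
    have hs : (0:ℝ) < Real.sqrt 3 := Real.sqrt_pos.mpr (by norm_num)
    have hcpos : (0:ℝ) < c := lt_trans (by positivity) hclb
    have hc2 : 3 / 4 < c ^ 2 := by nlinarith
    have key : (0:ℝ) < c ^ 2 * (4 * c ^ 2 - 3) :=
      mul_pos (by positivity) (by linarith)
    have h5 : 2 * c ^ 2 + 2 * (2 * c ^ 2 - 1) ^ 2 = 2 + 2 * (c ^ 2 * (4 * c ^ 2 - 3)) := by
      ring
    linarith
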